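/- Define J₀ : ℝ → ℝ by J₀(x) = ∫₀¹ cos(x·cos(2πs)) ds. Then for all x, y with 0 ≤ x ≤ y ≤ 2.4: J₀(x) − J₀(y) ≥ (y − x)²/16. Consequently, for all x, y ∈ [0, 2.4]: |x − y| ≤ 4·|J₀(x) − J₀(y)|^{1/2}; that is, the inverse of the restriction of J₀ to [0, 2.4] is ½-Hölder with constant 4. -/

import Mathlib

noncomputable section

open Real intervalIntegral

lemma sin_quarter {t : ℝ} (h0 : 0 ≤ t) (h1 : t ≤ 2.4) : t / 4 ≤ Real.sin t := by
  have hpi1 : (3.141592 : ℝ) ≤ π := Real.pi_gt_d6.le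
  have hpi2 : π ≤ 3.15 := Real.pi_lt_d2.le
  rcases le_or_gt t (π / 2) with ht | ht
  · have := Real.mul_le_sin h0 ht
    have hq : t / 4 ≤ 2 / π * t := by
      rw [div_mul_eq_mul_div, div_le_div_iff₀ (by norm_num) Real.pi_pos]
      nlinarith
    linarith
  · -- use sin t = sin (π - t)
    have key : (π - t) / 4 + (t - (π - t)) / 4 ≤ Real.sin (π - t) := by
      set u := π - t with hu
      have hu1 : u < π / 2 := by simp only [hu]; linarith
      have hu0 : 0 < u := by simp only [hu]; linarith
      rcases le_or_gt u 1 with h | h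
      · have := Real.sin_gt_sub_cube hu0
        nlinarith [sq_nonneg (u - 0.7415)]
      · have h2 : Real.sin 1 ≤ Real.sin u := by
          apply Real.strictMonoOn_sin.monotoneOn ⟨by linarith, by linarith⟩
            ⟨by linarith, hu1.le⟩ h.le
        have h3 : (1 : ℝ) - 1 ^ 3 / 4 < Real.sin 1 :=
          by have := Real.sin_gt_sub_cube one_pos; linarith
        simp only [hu]; nlinarith
    rw [Real.sin_pi_sub] at key
    linarith

lemma cos_sub_cos_ge {a b : ℝ} (h0 : 0 ≤ a) (hab : a ≤ b) (hb : b ≤ 2.4) :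
    (b ^ 2 - a ^ 2) / 8 ≤ Real.cos a - Real.cos b := by
  have hanti : AntitoneOn (fun t : ℝ => Real.cos t + t ^ 2 / 8) (Set.Icc 0 2.4) := by
    apply antitoneOn_of_deriv_nonpos (convex_Icc _ _)
    · exact (Real.continuous_cos.add (continuous_pow 2 |>.div_const 8)).continuousOn
    · intro t ht
      exact ((Real.differentiable_cos t).add
        (((differentiable_pow 2) t).div_const 8)).differentiableWithinAt
    · intro t ht
      rw [interior_Icc] at ht
      have hd : deriv (fun t : ℝ => Real.cos t + t ^ 2 / 8) t = -Real.sin t + 2 * t / 8 := by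
        rw [deriv_fun_add (Real.differentiable_cos t) (((differentiable_pow 2) t).div_const 8)]
        simp [Real.deriv_cos, mul_comm]
      rw [hd]
      have := sin_quarter ht.1.le ht.2.le
      linarith
  have := hanti (Set.mem_Icc.2 ⟨h0, hab.trans hb⟩) (Set.mem_Icc.2 ⟨h0.trans hab, hb⟩) hab
  simp only at this
  linarith

lemma pointwise {x y c : ℝ} (hx : 0 ≤ x) (hxy : x ≤ y) (hy : y ≤ 2.4) (hc : |c| ≤ 1) :
    (y - x) ^ 2 * c ^ 2 / 8 ≤ Real.cos (x * c) - Real.cos (y * c) := by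
  have hc0 : 0 ≤ |c| := abs_nonneg c
  have h1 : Real.cos (x * c) = Real.cos (x * |c|) := by
    rw [← Real.cos_abs (x * c), ← Real.cos_abs (x * |c|), abs_mul, abs_mul, abs_abs]
  have h2 : Real.cos (y * c) = Real.cos (y * |c|) := by
    rw [← Real.cos_abs (y * c), ← Real.cos_abs (y * |c|), abs_mul, abs_mul, abs_abs]
  rw [h1, h2]
  have key := cos_sub_cos_ge (a := x * |c|) (b := y * |c|)
    (by positivity) (by nlinarith) (by nlinarith)
  have hsq : (y * |c|) ^ 2 - (x * |c|) ^ 2 = (y ^ 2 - x ^ 2) * c ^ 2 := by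
    rw [mul_pow, mul_pow, sq_abs]; ring
  rw [hsq] at key
  nlinarith [mul_nonneg (mul_nonneg hx (sub_nonneg.2 hxy)) (sq_nonneg c)]

/-- The Bessel function of the first kind of order `0`. -/
noncomputable def J0 (x : ℝ) : ℝ :=
  ∫ s in (0:ℝ)..1, Real.cos (x * Real.cos (2 * Real.pi * s))

lemma cos_sq_integral : ∫ s in (0:ℝ)..1, Real.cos (2 * π * s) ^ 2 = 1 / 2 := by
  have h2pi : (2 * π : ℝ) ≠ 0 := by positivity
  have := intervalIntegral.integral_comp_mul_left (fun u => Real.cos u ^ 2) h2pi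
    (a := 0) (b := 1)
  rw [this]
  simp [integral_cos_sq, Real.sin_two_pi, Real.cos_two_pi]
  field_simp

lemma main_ineq {x y : ℝ} (hx : 0 ≤ x) (hxy : x ≤ y) (hy : y ≤ 2.4) :
    (y - x) ^ 2 / 16 ≤ J0 x - J0 y := by
  have hcont : ∀ z : ℝ, Continuous fun s : ℝ => Real.cos (z * Real.cos (2 * π * s)) := by
    intro z
    fun_prop
  have hInt : ∀ z : ℝ, IntervalIntegrable
      (fun s : ℝ => Real.cos (z * Real.cos (2 * π * s))) MeasureTheory.volume 0 1 :=
    fun z => (hcont z).intervalIntegrable 0 1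
  have hsub : J0 x - J0 y
      = ∫ s in (0:ℝ)..1, (Real.cos (x * Real.cos (2 * π * s))
          - Real.cos (y * Real.cos (2 * π * s))) :=
    (intervalIntegral.integral_sub (hInt x) (hInt y)).symm
  have hIntL : IntervalIntegrable
      (fun s : ℝ => (y - x) ^ 2 * Real.cos (2 * π * s) ^ 2 / 8) MeasureTheory.volume 0 1 := by
    apply Continuous.intervalIntegrable; fun_prop
  have hmono : (∫ s in (0:ℝ)..1, (y - x) ^ 2 * Real.cos (2 * π * s) ^ 2 / 8)
      ≤ ∫ s in (0:ℝ)..1, (Real.cos (x * Real.cos (2 * π * s))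
          - Real.cos (y * Real.cos (2 * π * s))) := by
    apply intervalIntegral.integral_mono_on (by norm_num) hIntL
      ((hInt x).sub (hInt y))
    intro s _
    exact pointwise hx hxy hy (Real.abs_cos_le_one _)
  have hL : (∫ s in (0:ℝ)..1, (y - x) ^ 2 * Real.cos (2 * π * s) ^ 2 / 8)
      = (y - x) ^ 2 / 16 := by
    have : (fun s : ℝ => (y - x) ^ 2 * Real.cos (2 * π * s) ^ 2 / 8)
        = fun s : ℝ => ((y - x) ^ 2 / 8) * Real.cos (2 * π * s) ^ 2 := by
      funext s; ring
    rw [this, intervalIntegral.integral_const_mul, cos_sq_integral]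
    ring
  rw [hsub]
  rw [hL] at hmono
  exact hmono

/-- `J₀(x) − J₀(y) ≥ (y−x)²/16` for `0 ≤ x ≤ y ≤ 2.4`; consequently the inverse of the
restriction of `J₀` to `[0, 2.4]` is `½`-Hölder with constant `4`. -/
theorem stmt15 :
    (∀ x y : ℝ, 0 ≤ x → x ≤ y → y ≤ 2.4 → (y - x) ^ 2 / 16 ≤ J0 x - J0 y) ∧
    (∀ x y : ℝ, x ∈ Set.Icc (0:ℝ) 2.4 → y ∈ Set.Icc (0:ℝ) 2.4 →
      |x - y| ≤ 4 * Real.sqrt |J0 x - J0 y|) := by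
  constructor
  · exact fun x y hx hxy hy => main_ineq hx hxy hy
  · have key : ∀ x y : ℝ, x ∈ Set.Icc (0:ℝ) 2.4 → y ∈ Set.Icc (0:ℝ) 2.4 → x ≤ y →
        |x - y| ≤ 4 * Real.sqrt |J0 x - J0 y| := by
      intro x y hx hy hxy
      have h := main_ineq hx.1 hxy hy.2
      have h0 : 0 ≤ (y - x) ^ 2 / 16 := by positivity
      have habs : (y - x) ^ 2 / 16 ≤ |J0 x - J0 y| := h.trans (le_abs_self _)
      have hs : Real.sqrt ((y - x) ^ 2 / 16) ≤ Real.sqrt |J0 x - J0 y| :=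
        Real.sqrt_le_sqrt habs
      have hval : Real.sqrt ((y - x) ^ 2 / 16) = (y - x) / 4 := by
        rw [show (y - x) ^ 2 / 16 = ((y - x) / 4) ^ 2 by ring,
          Real.sqrt_sq (by linarith)]
      rw [hval] at hs
      rw [abs_sub_comm, abs_of_nonneg (by linarith : (0:ℝ) ≤ y - x)]
      linarith
    intro x y hx hy
    rcases le_total x y with h | h
    · exact key x y hx hy h
    · rw [abs_sub_comm, abs_sub_comm (J0 x)]
      exact key y x hy hx h
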